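/- A Laurent polynomial f ∈ ℤ[t,t⁻¹] satisfies f(1) = 0 and f(t) = f(t⁻¹) if and only if f lies in the ℤ-submodule of ℤ[t,t⁻¹] generated by the set {t^k − 2 + t^{−k} : k ≥ 1}; equivalently, if and only if f can be written as a finite integer combination f(t) = Σ_{k>0} c_k (t^k − 2 + t^{−k}). -/

import Mathlib

open LaurentPolynomial

/-- Evaluation of a Laurent polynomial at `t = 1`, i.e. the sum of its coefficients. -/
def evalOne (f : LaurentPolynomial ℤ) : ℤ := f.coeff.sum fun _ c => c


noncomputable def E : LaurentPolynomial ℤ →ₗ[ℤ] ℤ :=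
  (Finsupp.lsum ℤ fun _ => LinearMap.id) ∘ₗ
    (AddMonoidAlgebra.coeffLinearEquiv ℤ).toLinearMap

lemma evalOne_eq (f : LaurentPolynomial ℤ) : evalOne f = E f := rfl
lemma evalOne_add (a b : LaurentPolynomial ℤ) : evalOne (a + b) = evalOne a + evalOne b :=
  map_add E a b
lemma evalOne_sub (a b : LaurentPolynomial ℤ) : evalOne (a - b) = evalOne a - evalOne b :=
  map_sub E a b
lemma evalOne_smul (c : ℤ) (a : LaurentPolynomial ℤ) : evalOne (c • a) = c * evalOne a :=
  map_smul E c a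
lemma two_eq_C : (2 : LaurentPolynomial ℤ) = C 2 := (map_ofNat C 2).symm
lemma two_apply (m : ℤ) : (2 : LaurentPolynomial ℤ).coeff m = if m = 0 then 2 else 0 := by
  rw [two_eq_C]; exact C_apply 2 m
lemma evalOne_T (k : ℤ) : evalOne (T k) = 1 := by
  rw [evalOne, show (T k : LaurentPolynomial ℤ).coeff = Finsupp.single k 1 from rfl]
  exact Finsupp.sum_single_index rfl
lemma evalOne_two : evalOne (2 : LaurentPolynomial ℤ) = 2 := by
  rw [two_eq_C, evalOne, show (C 2 : LaurentPolynomial ℤ).coeff = Finsupp.single 0 2 from rfl]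
  exact Finsupp.sum_single_index rfl
lemma invert_two : invert (2 : LaurentPolynomial ℤ) = 2 := map_ofNat invert 2


/-- A Laurent polynomial `f ∈ ℤ[t,t⁻¹]` satisfies `f(1) = 0` and `f(t) = f(t⁻¹)` iff
`f` lies in the `ℤ`-submodule generated by `{t^k − 2 + t^{−k} : k ≥ 1}`. -/
theorem evalOne_eq_zero_and_reciprocal_iff_mem_span (f : LaurentPolynomial ℤ) :
    (evalOne f = 0 ∧ invert f = f) ↔
      f ∈ Submodule.span ℤ
        {g : LaurentPolynomial ℤ | ∃ k : ℤ, 1 ≤ k ∧ g = T k - 2 + T (-k)} := by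
  constructor
  · rintro ⟨h1, h2⟩
    have hsym : ∀ n : ℤ, f.coeff (-n) = f.coeff n := fun n => by rw [← invert_apply, h2]
    set s : Finset ℤ := f.coeff.support.filter (fun n => 0 < n) with hs
    have hmem : ∀ n, n ∈ s ↔ f.coeff n ≠ 0 ∧ 0 < n := by
      intro n; simp [hs, Finset.mem_filter, Finsupp.mem_support_iff]
    -- the coefficient at 0
    have h0 : f.coeff 0 = -2 * ∑ n ∈ s, f.coeff n := by
      set B : Finset ℤ := insert 0 (s ∪ s.image (fun n => -n)) with hB
      have hsub : f.coeff.support ⊆ B := by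
        intro n hn
        have hn' : f.coeff n ≠ 0 := Finsupp.mem_support_iff.mp hn
        rcases lt_trichotomy n 0 with h | h | h
        · have : -n ∈ s := (hmem _).mpr ⟨by rw [hsym]; exact hn', by omega⟩
          refine Finset.mem_insert_of_mem (Finset.mem_union_right _ ?_)
          exact Finset.mem_image.mpr ⟨-n, this, by omega⟩
        · simp [hB, h]
        · exact Finset.mem_insert_of_mem (Finset.mem_union_left _ ((hmem _).mpr ⟨hn', h⟩))
      have hval : ∑ n ∈ B, f.coeff n = 0 := by
        rw [← Finset.sum_subset hsub (fun x _ hx => Finsupp.notMem_support_iff.mp hx)]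
        exact h1
      have h0B : (0 : ℤ) ∉ s ∪ s.image (fun n => -n) := by
        intro h
        rcases Finset.mem_union.mp h with h | h
        · exact absurd ((hmem _).mp h).2 (by omega)
        · obtain ⟨x, hx, hx0⟩ := Finset.mem_image.mp h
          exact absurd ((hmem _).mp hx).2 (by omega)
      have hdisj : Disjoint s (s.image (fun n => -n)) := by
        rw [Finset.disjoint_left]
        intro a ha hb
        obtain ⟨x, hx, hxa⟩ := Finset.mem_image.mp hb
        have := ((hmem _).mp ha).2
        have := ((hmem _).mp hx).2
        omega
      rw [hB, Finset.sum_insert h0B, Finset.sum_union hdisj,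
        Finset.sum_image (fun x _ y _ h => by omega)] at hval
      simp_rw [hsym] at hval
      linarith
    have key : f = ∑ n ∈ s, f.coeff n • (T n - 2 + T (-n)) := by
      refine LaurentPolynomial.ext fun m => ?_
      rw [AddMonoidAlgebra.coeff_sum, Finset.sum_apply']
      have hterm : ∀ n : ℤ, (f.coeff n • (T n - 2 + T (-n)) : LaurentPolynomial ℤ).coeff m
          = f.coeff n * ((if n = m then 1 else 0) - (if m = 0 then 2 else 0)
              + (if -n = m then 1 else 0)) := by
        intro n
        have e1 : (f.coeff n • (T n - 2 + T (-n)) : LaurentPolynomial ℤ).coeff m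
            = f.coeff n • ((T n - 2 + T (-n) : LaurentPolynomial ℤ).coeff m) :=
          AddMonoidAlgebra.coeff_smul_apply _ _ _
        have e2 : ((T n - 2 + T (-n) : LaurentPolynomial ℤ).coeff m)
            = ((T n : LaurentPolynomial ℤ).coeff m - (2 : LaurentPolynomial ℤ).coeff m)
                + (T (-n) : LaurentPolynomial ℤ).coeff m := by
          calc ((T n - 2 + T (-n) : LaurentPolynomial ℤ).coeff m)
              = ((T n - 2 : LaurentPolynomial ℤ).coeff m) + ((T (-n) : LaurentPolynomial ℤ).coeff m) :=
                by rw [AddMonoidAlgebra.coeff_add, Finsupp.add_apply]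
            _ = ((T n : LaurentPolynomial ℤ).coeff m - (2 : LaurentPolynomial ℤ).coeff m)
                + (T (-n) : LaurentPolynomial ℤ).coeff m :=
                congrArg (· + (T (-n) : LaurentPolynomial ℤ).coeff m)
                  (by rw [AddMonoidAlgebra.coeff_sub, Finsupp.sub_apply])
        rw [e1, e2, T_apply, T_apply, two_apply, smul_eq_mul]
      refine Eq.trans ?_ (Finset.sum_congr rfl fun n _ => (hterm n).symm)
      rcases lt_trichotomy m 0 with hm | hm | hm
      · rw [Finset.sum_eq_single (-m)]
        · rw [if_neg (by omega), if_neg (by omega), if_pos (by omega), hsym]; ring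
        · intro n hn hne
          have := ((hmem n).mp hn).2
          rw [if_neg (by omega), if_neg (by omega), if_neg (by omega)]; ring
        · intro h
          have : f.coeff (-m) = 0 := by
            by_contra hne
            exact h ((hmem (-m)).mpr ⟨hne, by omega⟩)
          rw [this]; ring
      · subst hm
        have hc : ∀ n ∈ s, f.coeff n * (((if n = (0:ℤ) then 1 else 0) - if (0:ℤ) = 0 then 2 else 0)
            + if -n = (0:ℤ) then 1 else 0) = f.coeff n * (-2) := by
          intro n hn
          have := ((hmem n).mp hn).2
          rw [if_neg (by omega), if_pos rfl, if_neg (by omega)]; ring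
        rw [Finset.sum_congr rfl hc, ← Finset.sum_mul, h0]; ring
      · rw [Finset.sum_eq_single m]
        · rw [if_pos rfl, if_neg (by omega), if_neg (by omega)]; ring
        · intro n hn hne
          have := ((hmem n).mp hn).2
          rw [if_neg (by omega), if_neg (by omega), if_neg (by omega)]; ring
        · intro h
          have : f.coeff m = 0 := by
            by_contra hne
            exact h ((hmem m).mpr ⟨hne, hm⟩)
          rw [this]; ring
    rw [key]
    refine Submodule.sum_mem _ fun n hn => Submodule.smul_mem _ _ (Submodule.subset_span ?_)
    exact ⟨n, ((hmem n).mp hn).2, rfl⟩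
  · intro hf
    induction hf using Submodule.span_induction with
    | mem g hg =>
      obtain ⟨k, hk, rfl⟩ := hg
      constructor
      · rw [evalOne_add, evalOne_sub, evalOne_T, evalOne_T, evalOne_two]; ring
      · rw [map_add, map_sub, invert_T, invert_T, invert_two, neg_neg]; ring
    | zero => exact ⟨rfl, map_zero invert⟩
    | add a b _ _ ha hb =>
      exact ⟨by rw [evalOne_add, ha.1, hb.1]; ring, by rw [map_add, ha.2, hb.2]⟩
    | smul c a _ ha =>
      exact ⟨by rw [evalOne_smul, ha.1]; ring, by rw [map_smul, ha.2]⟩
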